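/- arXiv:1012.3197 — 2 statements merged into one kernel-verified Lean document; each statement's English description precedes it below -/
import Mathlib

section
/- Let M ⊂ B(H) be a von Neumann algebra and S a deterministic quantum supermap from CB(M,B(H)) to CB(N,B(K)). If E, F are normal completely positive maps from M to B(H) satisfying E(I_H) = F(I_H), then [S(E)](I_N) = [S(F)](I_N). -/
open scoped ComplexOrder InnerProductSpace
open Filter Topology ContinuousLinearMap

set_option synthInstance.maxHeartbeats 1000000
set_option maxHeartbeats 1000000

noncomputable section

namespace QSM

noncomputable instance piLpComplete (ι : Type*) (E : Type*) [NormedAddCommGroup E]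
    [CompleteSpace E] : CompleteSpace (PiLp 2 fun _ : ι => E) :=
  PiLp.completeSpace 2 _

variable {H K : Type*}
  [NormedAddCommGroup H] [InnerProductSpace ℂ H] [CompleteSpace H]
  [NormedAddCommGroup K] [InnerProductSpace ℂ K] [CompleteSpace K]

/-- Sequential/net convergence in the weak operator topology. -/
def WOTto {E F : Type*} [NormedAddCommGroup E] [InnerProductSpace ℂ E]
    [NormedAddCommGroup F] [InnerProductSpace ℂ F]
    {ι : Type*} [Preorder ι] (T : ι → (E →L[ℂ] F)) (T' : E →L[ℂ] F) : Prop :=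
  ∀ x y, Tendsto (fun n => ⟪x, T n y⟫_ℂ) atTop (𝓝 ⟪x, T' y⟫_ℂ)

section MatOp

variable {ι : Type*} [Fintype ι] [DecidableEq ι]
variable {E F : Type*} [NormedAddCommGroup E] [InnerProductSpace ℂ E]
  [NormedAddCommGroup F] [InnerProductSpace ℂ F]

/-- The `j`-th coordinate projection on the Hilbert space direct sum. -/
def projCLM (E : Type*) [NormedAddCommGroup E] [InnerProductSpace ℂ E] (j : ι) :
    (PiLp 2 fun _ : ι => E) →L[ℂ] E :=
  (ContinuousLinearMap.proj j).comp (PiLp.continuousLinearEquiv 2 ℂ _).toContinuousLinearMap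

/-- The `i`-th coordinate inclusion into the Hilbert space direct sum. -/
def inclCLM (E : Type*) [NormedAddCommGroup E] [InnerProductSpace ℂ E] (i : ι) :
    E →L[ℂ] (PiLp 2 fun _ : ι => E) :=
  ((PiLp.continuousLinearEquiv 2 ℂ _).symm.toContinuousLinearMap).comp
    (ContinuousLinearMap.pi fun j => if j = i then ContinuousLinearMap.id ℂ E else 0)

/-- The operator on the `n`-fold Hilbert space direct sum determined by a matrix of operators.
This realizes the identification `Mₙ(B(E)) = B(Eⁿ)` used for amplifications. -/
def matOp (T : ι → ι → (E →L[ℂ] F)) : (PiLp 2 fun _ : ι => E) →L[ℂ] (PiLp 2 fun _ : ι => F) :=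
  ∑ i, ∑ j, (inclCLM F i).comp ((T i j).comp (projCLM E j))

end MatOp

variable (S : StarSubalgebra ℂ (H →L[ℂ] H))

/-- A linear map `Φ : S → B(K)` is completely positive if all of its amplifications
map positive matrices over `S` to positive operators. -/
def IsCPMap (Φ : S →ₗ[ℂ] (K →L[ℂ] K)) : Prop :=
  ∀ (n : ℕ) (a : Matrix (Fin n) (Fin n) S),
    (matOp fun i j => (a i j : H →L[ℂ] H)).IsPositive →
    (matOp fun i j => Φ (a i j)).IsPositive

/-- A linear map `Φ : S → B(K)` is completely bounded with complete bound `C` if all of its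
amplifications have norm at most `C` times the norm of the input matrix. -/
def IsCBMap (Φ : S →ₗ[ℂ] (K →L[ℂ] K)) (C : ℝ) : Prop :=
  ∀ (n : ℕ) (a : Matrix (Fin n) (Fin n) S),
    ‖matOp fun i j => Φ (a i j)‖ ≤ C * ‖matOp fun i j => (a i j : H →L[ℂ] H)‖

/-- Weak*-continuity (equivalently, for positive maps, normality) of a map `Φ : S → B(K)`:
`Φ` maps bounded weak-operator convergent sequences to weak-operator convergent sequences.
(On bounded sets of `B(H)`, `H` separable, the weak* topology coincides with the weak operator
topology and is metrizable, so sequences suffice.) -/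
def WStarCont (Φ : S →ₗ[ℂ] (K →L[ℂ] K)) : Prop :=
  ∀ (A : ℕ → S) (A' : S) (c : ℝ),
    (∀ n, ‖(A n : H →L[ℂ] H)‖ ≤ c) →
    WOTto (fun n => (A n : H →L[ℂ] H)) (A' : H →L[ℂ] H) →
    WOTto (fun n => Φ (A n)) (Φ A')

/-- A normal completely positive map. -/
def NormalCP (Φ : S →ₗ[ℂ] (K →L[ℂ] K)) : Prop :=
  IsCPMap S Φ ∧ WStarCont S Φ

/-- The cone ordering on maps: `Φ ⪯ Ψ` iff `Ψ - Φ` is a normal CP map. -/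
def CPle (Φ Ψ : S →ₗ[ℂ] (K →L[ℂ] K)) : Prop := NormalCP S (Ψ - Φ)

/-- A quantum channel into the von Neumann algebra `N`: a unital normal CP map with range in
`N`. -/
def IsChannel (N : VonNeumannAlgebra K) (Φ : S →ₗ[ℂ] (K →L[ℂ] K)) : Prop :=
  NormalCP S Φ ∧ (∀ X, Φ X ∈ N) ∧ Φ 1 = 1

/-- The elementary map `E ⊙ F : S → B(K)`, `A ↦ E A F`, for `E ∈ B(H,K)`, `F ∈ B(K,H)`. -/
def sandwichMap (L : H →L[ℂ] K) (R : K →L[ℂ] H) : S →ₗ[ℂ] (K →L[ℂ] K) where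
  toFun A := L ∘L ((A : H →L[ℂ] H) ∘L R)
  map_add' a b := by simp [add_comp, comp_add]
  map_smul' c a := by simp [smul_comp, comp_smulₛₗ]


/-- `B(H)` itself, regarded as a von Neumann algebra on `H`. -/
def topVN (H : Type*) [NormedAddCommGroup H] [InnerProductSpace ℂ H] [CompleteSpace H] :
    VonNeumannAlgebra H where
  toStarSubalgebra := ⊤
  centralizer_centralizer' := by
    show Set.centralizer (Set.centralizer ((⊤ : StarSubalgebra ℂ (H →L[ℂ] H)) : Set (H →L[ℂ] H)))
      = ((⊤ : StarSubalgebra ℂ (H →L[ℂ] H)) : Set (H →L[ℂ] H))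
    ext x
    simp only [Set.mem_centralizer_iff]
    constructor
    · intro _; simp
    · intro _ g hg
      exact (hg x (by simp)).symm

/-- The inclusion map `M ↪ B(H)` as a linear map. -/
def inclusionMap (M : VonNeumannAlgebra H) : M.toStarSubalgebra →ₗ[ℂ] (H →L[ℂ] H) where
  toFun A := (A : H →L[ℂ] H)
  map_add' _ _ := rfl
  map_smul' _ _ := rfl

theorem mem_topVN_sa {H : Type*} [NormedAddCommGroup H] [InnerProductSpace ℂ H]
    [CompleteSpace H] (a : H →L[ℂ] H) : a ∈ (topVN H).toStarSubalgebra := by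
  show a ∈ (⊤ : StarSubalgebra ℂ (H →L[ℂ] H))
  exact StarSubalgebra.mem_top

/-- The linear space of weak*-continuous completely bounded maps from `M` to `B(K)` with
values in `N`, realized (via the equality `CB = span CP` proved in the paper) as the linear
span of the normal completely positive maps from `M` into `N`. -/
def CBsp (M : VonNeumannAlgebra H) (N : VonNeumannAlgebra K) :
    Submodule ℂ (M.toStarSubalgebra →ₗ[ℂ] (K →L[ℂ] K)) :=
  Submodule.span ℂ {Φ | NormalCP M.toStarSubalgebra Φ ∧ ∀ X, Φ X ∈ N}

/-- `Eₙ ⇑ E` : the sequence `Eₙ` of normal CP maps is CP-increasing, CP-bounded by the normal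
CP map `E`, and converges pointwise to `E` in the weak operator topology (so that `E` is its
least upper bound). -/
def CPUp (E : ℕ → (S →ₗ[ℂ] (K →L[ℂ] K))) (E' : S →ₗ[ℂ] (K →L[ℂ] K)) : Prop :=
  (∀ n, NormalCP S (E n)) ∧ NormalCP S E' ∧
  (∀ n m, n ≤ m → CPle S (E n) (E m)) ∧ (∀ n, CPle S (E n) E') ∧
  ∀ X, WOTto (fun n => E n X) (E' X)

section Supermap

variable {H₁ K₁ H₂ K₂ : Type*}
  [NormedAddCommGroup H₁] [InnerProductSpace ℂ H₁] [CompleteSpace H₁]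
  [NormedAddCommGroup K₁] [InnerProductSpace ℂ K₁] [CompleteSpace K₁]
  [NormedAddCommGroup H₂] [InnerProductSpace ℂ H₂] [CompleteSpace H₂]
  [NormedAddCommGroup K₂] [InnerProductSpace ℂ K₂] [CompleteSpace K₂]
  {M₁ : VonNeumannAlgebra H₁} {N₁ : VonNeumannAlgebra K₁}
  {M₂ : VonNeumannAlgebra H₂} {N₂ : VonNeumannAlgebra K₂}

/-- Complete positivity of a supermap `Sm : CB(M₁,N₁) → CB(M₂,N₂)`: for every `n`, the
amplification `Iₙ ⊗ Sm` is positive.  Here a map `CB(M₁⁽ⁿ⁾,N₁⁽ⁿ⁾)` is encoded by its components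
`t k l i j ∈ CB(M₁,N₁)` under the identification `CB(M₁⁽ⁿ⁾,N₁⁽ⁿ⁾) = CB(Mₙ(ℂ),Mₙ(ℂ)) ⊗ CB(M₁,N₁)`,
and positivity of a map of matrix algebras means that it sends positive matrices (viewed as
operators on the direct sum via `matOp`) to positive matrices. -/
def SupCP (Sm : CBsp M₁ N₁ →ₗ[ℂ] CBsp M₂ N₂) : Prop :=
  ∀ (n : ℕ) (t : Fin n → Fin n → Fin n → Fin n → CBsp M₁ N₁),
    (∀ A : Matrix (Fin n) (Fin n) M₁.toStarSubalgebra,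
      (matOp fun i j => (A i j : H₁ →L[ℂ] H₁)).IsPositive →
      (matOp fun k l => ∑ i, ∑ j,
        ((t k l i j : M₁.toStarSubalgebra →ₗ[ℂ] (K₁ →L[ℂ] K₁)) (A i j))).IsPositive) →
    ∀ B : Matrix (Fin n) (Fin n) M₂.toStarSubalgebra,
      (matOp fun i j => (B i j : H₂ →L[ℂ] H₂)).IsPositive →
      (matOp fun k l => ∑ i, ∑ j,
        ((Sm (t k l i j) : M₂.toStarSubalgebra →ₗ[ℂ] (K₂ →L[ℂ] K₂)) (B i j))).IsPositive

/-- Normality of a supermap: `Sm` preserves least upper bounds of CP-increasing CP-bounded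
sequences. -/
def SupNormal (Sm : CBsp M₁ N₁ →ₗ[ℂ] CBsp M₂ N₂) : Prop :=
  ∀ (E : ℕ → CBsp M₁ N₁) (E' : CBsp M₁ N₁),
    CPUp M₁.toStarSubalgebra (fun n => (E n : M₁.toStarSubalgebra →ₗ[ℂ] (K₁ →L[ℂ] K₁)))
      (E' : M₁.toStarSubalgebra →ₗ[ℂ] (K₁ →L[ℂ] K₁)) →
    CPUp M₂.toStarSubalgebra (fun n => (Sm (E n) : M₂.toStarSubalgebra →ₗ[ℂ] (K₂ →L[ℂ] K₂)))
      (Sm E' : M₂.toStarSubalgebra →ₗ[ℂ] (K₂ →L[ℂ] K₂))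

/-- A quantum supermap: a linear, completely positive, normal map between spaces of
weak*-continuous completely bounded maps. -/
def IsSupermap (Sm : CBsp M₁ N₁ →ₗ[ℂ] CBsp M₂ N₂) : Prop :=
  SupCP Sm ∧ SupNormal Sm

/-- A deterministic quantum supermap: a quantum supermap mapping quantum channels to quantum
channels. -/
def IsDetSupermap (Sm : CBsp M₁ N₁ →ₗ[ℂ] CBsp M₂ N₂) : Prop :=
  IsSupermap Sm ∧
  ∀ E : CBsp M₁ N₁,
    IsChannel M₁.toStarSubalgebra N₁ (E : M₁.toStarSubalgebra →ₗ[ℂ] (K₁ →L[ℂ] K₁)) →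
    IsChannel M₂.toStarSubalgebra N₂ (Sm E : M₂.toStarSubalgebra →ₗ[ℂ] (K₂ →L[ℂ] K₂))

end Supermap

/-- The Loewner order on bounded operators. -/
def opLE {E : Type*} [NormedAddCommGroup E] [InnerProductSpace ℂ E] [CompleteSpace E]
    (a b : E →L[ℂ] E) : Prop := (b - a).IsPositive

/-- Least upper bounds for the Loewner order. -/
def opIsLUB {E : Type*} [NormedAddCommGroup E] [InnerProductSpace ℂ E] [CompleteSpace E]
    (s : Set (E →L[ℂ] E)) (a : E →L[ℂ] E) : Prop :=
  (∀ b ∈ s, opLE b a) ∧ ∀ c, (∀ b ∈ s, opLE b c) → opLE a c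

section Tensor

/-- A realization of the Hilbert space tensor product `H₁ ⊗ H₂` : a Hilbert space `G` together
with a bilinear map `t : H₁ × H₂ → G` with total range and satisfying the characteristic
inner product identity. -/
structure TensorStruct (H₁ H₂ G : Type*) [NormedAddCommGroup H₁] [InnerProductSpace ℂ H₁]
    [NormedAddCommGroup H₂] [InnerProductSpace ℂ H₂]
    [NormedAddCommGroup G] [InnerProductSpace ℂ G] : Type _ where
  t : H₁ →ₗ[ℂ] H₂ →ₗ[ℂ] G
  inner_t : ∀ x y v w, ⟪t x v, t y w⟫_ℂ = ⟪x, y⟫_ℂ * ⟪v, w⟫_ℂ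
  dense_t : Dense (↑(Submodule.span ℂ {g | ∃ x v, g = t x v}) : Set G)

variable {H₁ H₂ G : Type*}
  [NormedAddCommGroup H₁] [InnerProductSpace ℂ H₁] [CompleteSpace H₁]
  [NormedAddCommGroup H₂] [InnerProductSpace ℂ H₂] [CompleteSpace H₂]
  [NormedAddCommGroup G] [InnerProductSpace ℂ G] [CompleteSpace G]

/-- The set of elementary tensors `a ⊗ b`, `a ∈ M`, `b ∈ N`, inside `B(H₁ ⊗ H₂)`. -/
def elemT (τ : TensorStruct H₁ H₂ G) (M : VonNeumannAlgebra H₁) (N : VonNeumannAlgebra H₂) :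
    Set (G →L[ℂ] G) :=
  {c | ∃ a ∈ M, ∃ b ∈ N, ∀ x v, c (τ.t x v) = τ.t (a x) (b v)}

/-- The von Neumann algebra tensor product `M ⊗̄ N`, realized as the double commutant of the
set of elementary tensors. -/
def vnT (τ : TensorStruct H₁ H₂ G) (M : VonNeumannAlgebra H₁) (N : VonNeumannAlgebra H₂) :
    VonNeumannAlgebra G where
  toStarSubalgebra := StarSubalgebra.centralizer ℂ
    ((StarSubalgebra.centralizer ℂ (elemT τ M N) :
        StarSubalgebra ℂ (G →L[ℂ] G)) : Set (G →L[ℂ] G))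
  centralizer_centralizer' := by
    show Set.centralizer (Set.centralizer ((StarSubalgebra.centralizer ℂ
        ((StarSubalgebra.centralizer ℂ (elemT τ M N) :
          StarSubalgebra ℂ (G →L[ℂ] G)) : Set (G →L[ℂ] G))) : Set (G →L[ℂ] G)))
      = ((StarSubalgebra.centralizer ℂ
        ((StarSubalgebra.centralizer ℂ (elemT τ M N) :
          StarSubalgebra ℂ (G →L[ℂ] G)) : Set (G →L[ℂ] G))) : Set (G →L[ℂ] G))
    rw [StarSubalgebra.coe_centralizer_centralizer]
    exact Set.centralizer_centralizer_centralizer _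

end Tensor

section Amp

variable {H₁ K₁ H₂ K₂ V G G' : Type*}
  [NormedAddCommGroup H₁] [InnerProductSpace ℂ H₁] [CompleteSpace H₁]
  [NormedAddCommGroup K₁] [InnerProductSpace ℂ K₁] [CompleteSpace K₁]
  [NormedAddCommGroup H₂] [InnerProductSpace ℂ H₂] [CompleteSpace H₂]
  [NormedAddCommGroup K₂] [InnerProductSpace ℂ K₂] [CompleteSpace K₂]
  [NormedAddCommGroup V] [InnerProductSpace ℂ V] [CompleteSpace V]
  [NormedAddCommGroup G] [InnerProductSpace ℂ G] [CompleteSpace G]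
  [NormedAddCommGroup G'] [InnerProductSpace ℂ G'] [CompleteSpace G']

/-- `Ē` is the amplification `E ⊗ id_{B(V)} : M ⊗̄ B(V) → B(K₁ ⊗ V)` of the
weak*-continuous completely bounded map `E : M → B(K₁)` : it is weak*-continuous and acts in
the expected way on elementary tensors. -/
def IsAmp (M : VonNeumannAlgebra H₁) (τ : TensorStruct H₁ V G) (κ : TensorStruct K₁ V G')
    (E : M.toStarSubalgebra →ₗ[ℂ] (K₁ →L[ℂ] K₁))
    (Ebar : (vnT τ M (topVN V)).toStarSubalgebra →ₗ[ℂ] (G' →L[ℂ] G')) : Prop :=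
  WStarCont (vnT τ M (topVN V)).toStarSubalgebra Ebar ∧
  ∀ (c : (vnT τ M (topVN V)).toStarSubalgebra) (a : H₁ →L[ℂ] H₁) (ha : a ∈ M) (b : V →L[ℂ] V),
    (∀ x v, (c : G →L[ℂ] G) (τ.t x v) = τ.t (a x) (b v)) →
    ∀ x v, (Ebar c) (κ.t x v) = κ.t ((E ⟨a, ha⟩) x) (b v)

/-- The triple `(V, W, F)` (presented through concrete realizations `τ`, `κ` of the Hilbert
tensor products `H₁ ⊗ V` and `K₁ ⊗ V`) is a dilation of the supermap `Sm`, i.e.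
`[Sm(E)](A) = W* [(E ⊗ id_V)(F(A))] W` for all `E ∈ CB(M₁, B(K₁))` and `A ∈ M₂`. -/
def DilatesTo (M₁ : VonNeumannAlgebra H₁) (M₂ : VonNeumannAlgebra H₂)
    (τ : TensorStruct H₁ V G) (κ : TensorStruct K₁ V G') (W : K₂ →L[ℂ] G')
    (F : M₂.toStarSubalgebra →ₗ[ℂ] (G →L[ℂ] G)) (hF : ∀ X, F X ∈ vnT τ M₁ (topVN V))
    (Sm : CBsp M₁ (topVN K₁) →ₗ[ℂ] CBsp M₂ (topVN K₂)) : Prop :=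
  ∀ E : CBsp M₁ (topVN K₁),
    ∃ Ebar, IsAmp M₁ τ κ (E : M₁.toStarSubalgebra →ₗ[ℂ] (K₁ →L[ℂ] K₁)) Ebar ∧
      ∀ A, (Sm E : M₂.toStarSubalgebra →ₗ[ℂ] (K₂ →L[ℂ] K₂)) A
        = (ContinuousLinearMap.adjoint W) ∘L ((Ebar ⟨F A, hF A⟩) ∘L W)

/-- Minimality of a dilation: `V = span closure of {(u* ⊗ I_V) W v | u ∈ K₁, v ∈ K₂}`. -/
def MinimalDil (κ : TensorStruct K₁ V G') (W : K₂ →L[ℂ] G') : Prop :=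
  Dense (↑(Submodule.span ℂ {w : V | ∃ (u : K₁) (v : K₂) (ℓ : G' →L[ℂ] V),
    (∀ k z, ℓ (κ.t k z) = ⟪u, k⟫_ℂ • z) ∧ w = ℓ (W v)}) : Set V)

end Amp

/-- A bundled separable complex Hilbert space. -/
structure HilbertSpaceStruct : Type 1 where
  carrier : Type
  [grp : NormedAddCommGroup carrier]
  [ipc : InnerProductSpace ℂ carrier]
  [cpl : CompleteSpace carrier]
  [sep : TopologicalSpace.SeparableSpace carrier]

attribute [instance] HilbertSpaceStruct.grp HilbertSpaceStruct.ipc HilbertSpaceStruct.cpl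
  HilbertSpaceStruct.sep


set_option linter.unusedSectionVars false

section Aux

variable {ι : Type*} [Fintype ι] [DecidableEq ι]
variable {E₀ F₀ : Type*} [NormedAddCommGroup E₀] [InnerProductSpace ℂ E₀]
  [NormedAddCommGroup F₀] [InnerProductSpace ℂ F₀]

lemma inclCLM_apply (i k : ι) (y : F₀) :
    (inclCLM (ι := ι) F₀ i y) k = if k = i then y else 0 := by
  change (ContinuousLinearMap.pi fun j => if j = i then ContinuousLinearMap.id ℂ F₀ else 0) y k = _
  rw [ContinuousLinearMap.pi_apply]
  by_cases h : k = i <;> simp [h]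

lemma projCLM_apply (j : ι) (v : PiLp 2 fun _ : ι => E₀) :
    projCLM (ι := ι) E₀ j v = v j := rfl

lemma matOp_inner (T : ι → ι → (E₀ →L[ℂ] F₀)) (v : PiLp 2 fun _ : ι => E₀)
    (w : PiLp 2 fun _ : ι => F₀) :
    ⟪w, matOp T v⟫_ℂ = ∑ i, ∑ j, ⟪w i, T i j (v j)⟫_ℂ := by
  unfold matOp
  rw [ContinuousLinearMap.sum_apply, inner_sum]
  refine Finset.sum_congr rfl fun i _ => ?_
  rw [ContinuousLinearMap.sum_apply, inner_sum]
  refine Finset.sum_congr rfl fun j _ => ?_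
  rw [ContinuousLinearMap.comp_apply, ContinuousLinearMap.comp_apply, projCLM_apply,
    PiLp.inner_apply]
  rw [Finset.sum_eq_single i (fun k _ hk => by rw [inclCLM_apply]; simp [hk])
    (fun h => absurd (Finset.mem_univ i) h)]
  rw [inclCLM_apply]; simp

lemma isPositive_iff_inner {E₀ : Type*} [NormedAddCommGroup E₀] [InnerProductSpace ℂ E₀]
    [CompleteSpace E₀] (T : E₀ →L[ℂ] E₀) :
    T.IsPositive ↔ ∀ v, 0 ≤ ⟪v, T v⟫_ℂ := by
  rw [ContinuousLinearMap.isPositive_iff_complex]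
  constructor
  · intro h v
    obtain ⟨h1, h2⟩ := h v
    rw [← inner_conj_symm, ← h1]
    simp only [RCLike.re_to_complex] at h1 h2 ⊢
    rw [Complex.conj_ofReal]
    exact_mod_cast h2
  · intro h v
    have h0 := h v
    rw [Complex.nonneg_iff] at h0
    have hz : ⟪v, T v⟫_ℂ = ((⟪v, T v⟫_ℂ).re : ℂ) := Complex.ext rfl (by simp [← h0.2])
    have hTv : ⟪T v, v⟫_ℂ = ((⟪v, T v⟫_ℂ).re : ℂ) := by
      rw [← inner_conj_symm (T v) v, hz, Complex.conj_ofReal]; simp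
    constructor
    · rw [hTv]; simp [RCLike.re_to_complex]
    · simp only [RCLike.re_to_complex, hTv, Complex.ofReal_re]; exact h0.1

end Aux

section Aux2

variable {H K : Type*} [NormedAddCommGroup H] [InnerProductSpace ℂ H] [CompleteSpace H]
  [NormedAddCommGroup K] [InnerProductSpace ℂ K] [CompleteSpace K]

/-- The map `A ↦ ⟪x, A x⟫ • P`. -/
def theta (S : StarSubalgebra ℂ (H →L[ℂ] H)) (x : H) (P : K →L[ℂ] K) :
    S →ₗ[ℂ] (K →L[ℂ] K) where
  toFun A := ⟪x, (A : H →L[ℂ] H) x⟫_ℂ • P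
  map_add' a b := by
    simp only [AddMemClass.coe_add, ContinuousLinearMap.add_apply, inner_add_right, add_smul]
  map_smul' c a := by
    simp only [SetLike.val_smul, ContinuousLinearMap.coe_smul', Pi.smul_apply,
      inner_smul_right, RingHom.id_apply, smul_smul]

lemma theta_apply (S : StarSubalgebra ℂ (H →L[ℂ] H)) (x : H) (P : K →L[ℂ] K) (A : S) :
    theta S x P A = ⟪x, (A : H →L[ℂ] H) x⟫_ℂ • P := rfl

lemma theta_wstar (S : StarSubalgebra ℂ (H →L[ℂ] H)) (x : H) (P : K →L[ℂ] K) :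
    WStarCont S (theta S x P) := by
  intro A A' c _ hwot y z
  have hval : ∀ B : S, ⟪y, (theta S x P B) z⟫_ℂ = ⟪x, (B : H →L[ℂ] H) x⟫_ℂ * ⟪y, P z⟫_ℂ := by
    intro B; rw [theta_apply]; simp [inner_smul_right]
  simp only [hval]
  exact (hwot x x).mul_const _

lemma wstar_add {S : StarSubalgebra ℂ (H →L[ℂ] H)} {Φ Ψ : S →ₗ[ℂ] (K →L[ℂ] K)}
    (hΦ : WStarCont S Φ) (hΨ : WStarCont S Ψ) : WStarCont S (Φ + Ψ) := by
  intro A A' c hb hwot y z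
  simp only [LinearMap.add_apply, ContinuousLinearMap.add_apply, inner_add_right]
  exact (hΦ A A' c hb hwot y z).add (hΨ A A' c hb hwot y z)

lemma wstar_smul {S : StarSubalgebra ℂ (H →L[ℂ] H)} {Φ : S →ₗ[ℂ] (K →L[ℂ] K)}
    (z₀ : ℂ) (hΦ : WStarCont S Φ) : WStarCont S (z₀ • Φ) := by
  intro A A' c hb hwot y z
  simp only [LinearMap.smul_apply, ContinuousLinearMap.coe_smul', Pi.smul_apply,
    inner_smul_right]
  exact (hΦ A A' c hb hwot y z).const_mul _

lemma cp_add {S : StarSubalgebra ℂ (H →L[ℂ] H)} {Φ Ψ : S →ₗ[ℂ] (K →L[ℂ] K)}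
    (hΦ : IsCPMap S Φ) (hΨ : IsCPMap S Ψ) : IsCPMap S (Φ + Ψ) := by
  intro n a ha
  rw [isPositive_iff_inner]
  intro v
  have h1 := (isPositive_iff_inner _).mp (hΦ n a ha) v
  have h2 := (isPositive_iff_inner _).mp (hΨ n a ha) v
  rw [matOp_inner] at h1 h2 ⊢
  simp only [LinearMap.add_apply, ContinuousLinearMap.add_apply, inner_add_right,
    Finset.sum_add_distrib]
  exact add_nonneg h1 h2

lemma cp_rsmul {S : StarSubalgebra ℂ (H →L[ℂ] H)} {Φ : S →ₗ[ℂ] (K →L[ℂ] K)}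
    (r : ℝ) (hr : 0 ≤ r) (hΦ : IsCPMap S Φ) : IsCPMap S ((r : ℂ) • Φ) := by
  intro n a ha
  rw [isPositive_iff_inner]
  intro v
  have h1 := (isPositive_iff_inner _).mp (hΦ n a ha) v
  rw [matOp_inner] at h1 ⊢
  have : ∀ i j, ⟪v i, ((r : ℂ) • Φ) (a i j) (v j)⟫_ℂ = (r : ℂ) * ⟪v i, Φ (a i j) (v j)⟫_ℂ := by
    intro i j
    rw [LinearMap.smul_apply, ContinuousLinearMap.coe_smul', Pi.smul_apply, inner_smul_right]
  simp only [this, ← Finset.mul_sum]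
  exact mul_nonneg (Complex.zero_le_real.mpr hr) h1

lemma cp_map_one_pos {S : StarSubalgebra ℂ (H →L[ℂ] H)} {Φ : S →ₗ[ℂ] (K →L[ℂ] K)}
    (h : IsCPMap S Φ) : (Φ 1).IsPositive := by
  have hid : (matOp fun _ _ : Fin 1 => ((1 : S) : H →L[ℂ] H)).IsPositive := by
    rw [isPositive_iff_inner]
    intro v
    rw [matOp_inner]
    simp only [Fin.sum_univ_one, OneMemClass.coe_one, ContinuousLinearMap.one_apply]
    rw [inner_self_eq_norm_sq_to_K, ← RCLike.ofReal_pow]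
    exact RCLike.ofReal_nonneg.mpr (sq_nonneg _)
  have h2 := h 1 (fun _ _ => 1) hid
  rw [isPositive_iff_inner] at h2 ⊢
  intro y
  have h3 := h2 ((WithLp.equiv 2 (∀ _ : Fin 1, K)).symm fun _ => y)
  rw [matOp_inner] at h3
  simpa [Fin.sum_univ_one, WithLp.equiv_symm_apply, PiLp.toLp_apply] using h3

lemma shift_pos {D : H →L[ℂ] H} (hD : D.IsPositive) :
    (((‖D‖ + 1 : ℝ) : ℂ) • (1 : H →L[ℂ] H) - D).IsPositive := by
  rw [isPositive_iff_inner]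
  intro v
  have h0 := (isPositive_iff_inner D).mp hD v
  rw [Complex.nonneg_iff] at h0
  have hz : ⟪v, D v⟫_ℂ = ((⟪v, D v⟫_ℂ).re : ℂ) := Complex.ext rfl (by simp [← h0.2])
  have hre : (⟪v, D v⟫_ℂ).re ≤ ‖D‖ * ‖v‖ ^ 2 := by
    calc (⟪v, D v⟫_ℂ).re ≤ ‖⟪v, D v⟫_ℂ‖ := Complex.re_le_norm _
      _ ≤ ‖v‖ * ‖D v‖ := norm_inner_le_norm _ _
      _ ≤ ‖v‖ * (‖D‖ * ‖v‖) := by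
          exact mul_le_mul_of_nonneg_left (D.le_opNorm v) (norm_nonneg v)
      _ = ‖D‖ * ‖v‖ ^ 2 := by ring
  set t := (⟪v, D v⟫_ℂ).re with ht
  have hcalc : ⟪v, (((‖D‖ + 1 : ℝ) : ℂ) • (1 : H →L[ℂ] H) - D) v⟫_ℂ
      = (((‖D‖ + 1) * ‖v‖ ^ 2 - t : ℝ) : ℂ) := by
    rw [ContinuousLinearMap.sub_apply, inner_sub_right, ContinuousLinearMap.coe_smul',
      Pi.smul_apply, ContinuousLinearMap.one_apply, inner_smul_right,
      inner_self_eq_norm_sq_to_K, hz]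
    simp only [show ∀ r : ℝ, (RCLike.ofReal r : ℂ) = (r : ℂ) from fun _ => rfl]
    push_cast
    ring
  rw [hcalc, Complex.zero_le_real]
  nlinarith [sq_nonneg ‖v‖]

end Aux2

section Aux3

variable {H K : Type*} [NormedAddCommGroup H] [InnerProductSpace ℂ H] [CompleteSpace H]
  [NormedAddCommGroup K] [InnerProductSpace ℂ K] [CompleteSpace K]

lemma theta_cp (S : StarSubalgebra ℂ (H →L[ℂ] H)) (x : H) (P : K →L[ℂ] K)
    (hP : P.IsPositive) : IsCPMap S (theta S x P) := by
  intro n a ha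
  rw [isPositive_iff_inner]
  intro v
  rw [matOp_inner]
  set T : (PiLp 2 fun _ : Fin n => H) →L[ℂ] (PiLp 2 fun _ : Fin n => H) :=
    matOp fun i j => ((a i j : H →L[ℂ] H)) with hT
  set s : Matrix (Fin n) (Fin n) ℂ := fun i j => ⟪x, (a i j : H →L[ℂ] H) x⟫_ℂ with hs
  have hterm : ∀ i j : Fin n,
      ⟪v i, (theta S x P) (a i j) (v j)⟫_ℂ = s i j * ⟪v i, P (v j)⟫_ℂ := by
    intro i j
    rw [theta_apply, ContinuousLinearMap.coe_smul', Pi.smul_apply, inner_smul_right]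
  simp only [hterm]
  -- the test vectors
  set e : Fin n → PiLp 2 (fun _ : Fin n => H) :=
    fun i => (WithLp.equiv 2 (∀ _ : Fin n, H)).symm fun k => if k = i then x else 0 with he
  have he' : ∀ i k, e i k = if k = i then x else 0 := fun i k => rfl
  have hs_eq : ∀ i j, ⟪e i, T (e j)⟫_ℂ = s i j := by
    intro i j
    rw [hT, matOp_inner]
    rw [Finset.sum_eq_single i (fun k _ hk => by simp [he', hk])
      (fun h => absurd (Finset.mem_univ i) h)]
    rw [Finset.sum_eq_single j (fun l _ hl => by simp [he', hl])
      (fun h => absurd (Finset.mem_univ j) h)]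
    simp [he', hs]
  have hsymm := ha.1
  have hherm : s.IsHermitian := by
    refine Matrix.ext fun i j => ?_
    rw [Matrix.conjTranspose_apply]
    calc star (s j i) = (starRingEnd ℂ) ⟪e j, T (e i)⟫_ℂ := by rw [hs_eq]; rfl
      _ = ⟪T (e i), e j⟫_ℂ := inner_conj_symm _ _
      _ = ⟪e i, T (e j)⟫_ℂ := hsymm _ _
      _ = s i j := hs_eq i j
  have hpsd : s.PosSemidef := by
    refine Matrix.PosSemidef.of_dotProduct_mulVec_nonneg hherm fun lam => ?_
    set w : PiLp 2 (fun _ : Fin n => H) :=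
      (WithLp.equiv 2 (∀ _ : Fin n, H)).symm fun k => lam k • x with hw
    have hw' : ∀ k, w k = lam k • x := fun k => rfl
    have h1 := (isPositive_iff_inner T).mp ha w
    rw [hT, matOp_inner] at h1
    have h2 : ∑ i, ∑ j, ⟪w i, (a i j : H →L[ℂ] H) (w j)⟫_ℂ
        = ∑ i, ∑ j, star (lam i) * (s i j * lam j) := by
      refine Finset.sum_congr rfl fun i _ => Finset.sum_congr rfl fun j _ => ?_
      rw [hw' i, hw' j, map_smul, inner_smul_left, inner_smul_right]
      rw [show s i j = ⟪x, (a i j : H →L[ℂ] H) x⟫_ℂ from rfl,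
        show (star (lam i) : ℂ) = (starRingEnd ℂ) (lam i) from rfl]
      ring
    rw [h2] at h1
    have h3 : dotProduct (star lam) (s.mulVec lam)
        = ∑ i, ∑ j, star (lam i) * (s i j * lam j) := by
      simp [dotProduct, Matrix.mulVec, Finset.mul_sum]
    rw [h3]
    exact h1
  obtain ⟨B, hB⟩ : ∃ B : Matrix (Fin n) (Fin n) ℂ, s = B.conjTranspose * B := by
    open scoped MatrixOrder Matrix.Norms.L2Operator in
    exact CStarAlgebra.nonneg_iff_eq_star_mul_self.mp hpsd.nonneg
  have hP' : ∀ m, ⟪∑ i, B m i • v i, P (∑ j, B m j • v j)⟫_ℂ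
      = ∑ i, ∑ j, (starRingEnd ℂ) (B m i) * (B m j * ⟪v i, P (v j)⟫_ℂ) := by
    intro m
    rw [sum_inner]
    refine Finset.sum_congr rfl fun i _ => ?_
    rw [inner_smul_left, map_sum, inner_sum, Finset.mul_sum]
    refine Finset.sum_congr rfl fun j _ => ?_
    rw [map_smul, inner_smul_right]
  have hkey : ∑ i, ∑ j, s i j * ⟪v i, P (v j)⟫_ℂ
      = ∑ m, ⟪∑ i, B m i • v i, P (∑ j, B m j • v j)⟫_ℂ := by
    calc ∑ i, ∑ j, s i j * ⟪v i, P (v j)⟫_ℂ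
        = ∑ i, ∑ j, ∑ m, (starRingEnd ℂ) (B m i) * (B m j * ⟪v i, P (v j)⟫_ℂ) := by
          refine Finset.sum_congr rfl fun i _ => Finset.sum_congr rfl fun j _ => ?_
          rw [hB, Matrix.mul_apply, Finset.sum_mul]
          refine Finset.sum_congr rfl fun m _ => ?_
          rw [Matrix.conjTranspose_apply,
            show (star (B m i) : ℂ) = (starRingEnd ℂ) (B m i) from rfl]
          ring
      _ = ∑ m, ∑ i, ∑ j, (starRingEnd ℂ) (B m i) * (B m j * ⟪v i, P (v j)⟫_ℂ) := by
          have e1 : ∀ i : Fin n,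
              (∑ j, ∑ m, (starRingEnd ℂ) (B m i) * (B m j * ⟪v i, P (v j)⟫_ℂ))
                = ∑ m, ∑ j, (starRingEnd ℂ) (B m i) * (B m j * ⟪v i, P (v j)⟫_ℂ) :=
            fun i => Finset.sum_comm
          simp only [e1]
          exact Finset.sum_comm
      _ = ∑ m, ⟪∑ i, B m i • v i, P (∑ j, B m j • v j)⟫_ℂ := by
          exact Finset.sum_congr rfl fun m _ => (hP' m).symm
  rw [hkey]
  exact Finset.sum_nonneg fun m _ => (isPositive_iff_inner P).mp hP _

end Aux3

/-- If `S` is a deterministic quantum supermap from `CB(M,B(H))` to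
`CB(N,B(K))` and `E, F` are normal CP maps from `M` to `B(H)` with `E(I_H) = F(I_H)`, then
`[S(E)](I_N) = [S(F)](I_N)`. -/
theorem statement9 {H K : Type*} [NormedAddCommGroup H] [InnerProductSpace ℂ H] [CompleteSpace H] [TopologicalSpace.SeparableSpace H] [NormedAddCommGroup K] [InnerProductSpace ℂ K] [CompleteSpace K] [TopologicalSpace.SeparableSpace K]
    (M : VonNeumannAlgebra H) (N : VonNeumannAlgebra K)
    (Sm : CBsp M (topVN H) →ₗ[ℂ] CBsp N (topVN K)) (hS : IsDetSupermap Sm)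
    (E F : CBsp M (topVN H))
    (hE : NormalCP M.toStarSubalgebra (E : M.toStarSubalgebra →ₗ[ℂ] (H →L[ℂ] H)))
    (hF : NormalCP M.toStarSubalgebra (F : M.toStarSubalgebra →ₗ[ℂ] (H →L[ℂ] H)))
    (h1 : (E : M.toStarSubalgebra →ₗ[ℂ] (H →L[ℂ] H)) 1
        = (F : M.toStarSubalgebra →ₗ[ℂ] (H →L[ℂ] H)) 1) :
    (Sm E : N.toStarSubalgebra →ₗ[ℂ] (K →L[ℂ] K)) 1
      = (Sm F : N.toStarSubalgebra →ₗ[ℂ] (K →L[ℂ] K)) 1 := by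
  rcases subsingleton_or_nontrivial H with hH | hH
  · haveI hsub : Subsingleton (H →L[ℂ] H) :=
      ⟨fun f g => ContinuousLinearMap.ext fun v => Subsingleton.elim _ _⟩
    have hEF : E = F := Subtype.ext (LinearMap.ext fun A => Subsingleton.elim _ _)
    rw [hEF]
  · obtain ⟨y0, hy0⟩ := exists_ne (0 : H)
    have hy0' : ‖y0‖ ≠ 0 := norm_ne_zero_iff.mpr hy0
    set x : H := ‖y0‖⁻¹ • y0 with hxdef
    have hx : ‖x‖ = 1 := by
      rw [hxdef, norm_smul, norm_inv, norm_norm, inv_mul_cancel₀ hy0']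
    have hxx : ⟪x, x⟫_ℂ = 1 := by
      rw [inner_self_eq_norm_sq_to_K, hx]
      norm_num
    have hDpos : ((E : M.toStarSubalgebra →ₗ[ℂ] (H →L[ℂ] H)) 1).IsPositive :=
      cp_map_one_pos hE.1
    set D : H →L[ℂ] H := (E : M.toStarSubalgebra →ₗ[ℂ] (H →L[ℂ] H)) 1 with hD
    set c : ℝ := ‖D‖ + 1 with hc
    have hc0 : (0 : ℝ) < c := by positivity
    have hcC : ((c : ℂ)) ≠ 0 := by exact_mod_cast hc0.ne'
    set P : H →L[ℂ] H := (c : ℂ) • (1 : H →L[ℂ] H) - D with hPdef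
    have hP : P.IsPositive := shift_pos hDpos
    set Θ : M.toStarSubalgebra →ₗ[ℂ] (H →L[ℂ] H) := theta M.toStarSubalgebra x P with hΘ
    have hΘn : NormalCP M.toStarSubalgebra Θ := ⟨theta_cp _ _ _ hP, theta_wstar _ _ _⟩
    have hΘmem : Θ ∈ CBsp M (topVN H) :=
      Submodule.subset_span ⟨hΘn, fun X => mem_topVN_sa _⟩
    set Θ' : CBsp M (topVN H) := ⟨Θ, hΘmem⟩ with hΘ'
    have hΘ1 : Θ 1 = P := by
      rw [hΘ, theta_apply,
        show (((1 : M.toStarSubalgebra) : H →L[ℂ] H)) = 1 from rfl,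
        ContinuousLinearMap.one_apply, hxx, one_smul]
    have key : ∀ G : CBsp M (topVN H),
        NormalCP M.toStarSubalgebra (G : M.toStarSubalgebra →ₗ[ℂ] (H →L[ℂ] H)) →
        (G : M.toStarSubalgebra →ₗ[ℂ] (H →L[ℂ] H)) 1 = D →
        (c : ℂ)⁻¹ • ((Sm G : N.toStarSubalgebra →ₗ[ℂ] (K →L[ℂ] K)) 1
          + (Sm Θ' : N.toStarSubalgebra →ₗ[ℂ] (K →L[ℂ] K)) 1) = 1 := by
      intro G hG hG1
      have hchan : IsChannel M.toStarSubalgebra (topVN H)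
          ((((c : ℂ)⁻¹ • (G + Θ') : CBsp M (topVN H))) :
            M.toStarSubalgebra →ₗ[ℂ] (H →L[ℂ] H)) := by
        have hcoe : ((((c : ℂ)⁻¹ • (G + Θ') : CBsp M (topVN H))) :
            M.toStarSubalgebra →ₗ[ℂ] (H →L[ℂ] H))
            = (c : ℂ)⁻¹ • ((G : M.toStarSubalgebra →ₗ[ℂ] (H →L[ℂ] H)) + Θ) := rfl
        rw [hcoe]
        refine ⟨⟨?_, ?_⟩, fun X => mem_topVN_sa _, ?_⟩
        · have hcp := cp_rsmul (c⁻¹) (inv_nonneg.mpr hc0.le) (cp_add hG.1 hΘn.1)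
          have hcast : ((c⁻¹ : ℝ) : ℂ) = ((c : ℂ))⁻¹ := by push_cast; ring
          rwa [hcast] at hcp
        · exact wstar_smul _ (wstar_add hG.2 hΘn.2)
        · rw [LinearMap.smul_apply, LinearMap.add_apply, hG1, hΘ1, hPdef,
            show D + ((c : ℂ) • (1 : H →L[ℂ] H) - D) = (c : ℂ) • 1 by abel,
            smul_smul, inv_mul_cancel₀ hcC, one_smul]
      have h1' := (hS.2 _ hchan).2.2
      rw [map_smul, map_add] at h1'
      rwa [show ((((c : ℂ)⁻¹ • (Sm G + Sm Θ') : CBsp N (topVN K))) :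
          N.toStarSubalgebra →ₗ[ℂ] (K →L[ℂ] K)) 1
          = (c : ℂ)⁻¹ • ((Sm G : N.toStarSubalgebra →ₗ[ℂ] (K →L[ℂ] K)) 1
            + (Sm Θ' : N.toStarSubalgebra →ₗ[ℂ] (K →L[ℂ] K)) 1) from rfl] at h1'
    have kE := key E hE hD.symm
    have kF := key F hF h1.symm
    have hmain := kE.trans kF.symm
    have h2 := congrArg (fun z => (c : ℂ) • z) hmain
    simp only [smul_smul, mul_inv_cancel₀ hcC, one_smul] at h2
    exact add_right_cancel h2

end QSM
end
end

section
/- Let H be a separable Hilbert space with Hilbert basis {e_i}_{i∈ℕ}, and let P_n be the orthogonal projection onto span{e_i : i ≤ n}. A unital *-homomorphism π : B(H) → B(Û) (with Û a not necessarily separable Hilbert space) is normal if and only if π(P_n) ↑ I_Û. -/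
open scoped ComplexOrder InnerProductSpace
open Filter Topology ContinuousLinearMap

set_option synthInstance.maxHeartbeats 1000000
set_option maxHeartbeats 1000000

noncomputable section

namespace QSM

variable {H K : Type*}
  [NormedAddCommGroup H] [InnerProductSpace ℂ H] [CompleteSpace H]
  [NormedAddCommGroup K] [InnerProductSpace ℂ K] [CompleteSpace K]

variable (S : StarSubalgebra ℂ (H →L[ℂ] H))

/-- A unital *-homomorphism `π : B(H) → B(U)` is normal if it preserves least upper bounds of
bounded increasing nets of positive operators. -/
def NormalHom {H U : Type*} [NormedAddCommGroup H] [InnerProductSpace ℂ H] [CompleteSpace H]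
    [NormedAddCommGroup U] [InnerProductSpace ℂ U] [CompleteSpace U]
    (π : (H →L[ℂ] H) →⋆ₐ[ℂ] (U →L[ℂ] U)) : Prop :=
  ∀ {ι : Type} [Preorder ι] [Nonempty ι] [IsDirected ι (· ≤ ·)],
  ∀ (T : ι → (H →L[ℂ] H)) (T' : H →L[ℂ] H),
    (∀ i, (T i).IsPositive) → (∀ i j, i ≤ j → opLE (T i) (T j)) →
    (∃ Bd, ∀ i, opLE (T i) Bd) →
    opIsLUB (Set.range T) T' → opIsLUB (Set.range fun i => π (T i)) (π T')


section AuxLemmas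

variable {E F U : Type*}
  [NormedAddCommGroup E] [InnerProductSpace ℂ E] [CompleteSpace E]
  [NormedAddCommGroup U] [InnerProductSpace ℂ U] [CompleteSpace U]

lemma aux_nonneg_map (π : (E →L[ℂ] E) →⋆ₐ[ℂ] (U →L[ℂ] U)) {a : E →L[ℂ] E} (ha : 0 ≤ a) :
    0 ≤ π a := by
  have h2 : CFC.sqrt a ^ 2 = a := CFC.sq_sqrt a ha
  have hsa : IsSelfAdjoint (CFC.sqrt a) := IsSelfAdjoint.of_nonneg (CFC.sqrt_nonneg (a := a))
  calc (0 : U →L[ℂ] U) ≤ star (π (CFC.sqrt a)) * π (CFC.sqrt a) := star_mul_self_nonneg _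
  _ = π a := by rw [← map_star, hsa.star_eq, ← map_mul, ← sq, h2]

lemma aux_le_iff_sub_nonneg (a b : E →L[ℂ] E) : a ≤ b ↔ 0 ≤ b - a :=
  (ContinuousLinearMap.le_def a b).trans (ContinuousLinearMap.nonneg_iff_isPositive _).symm

lemma aux_map_mono (π : (E →L[ℂ] E) →⋆ₐ[ℂ] (U →L[ℂ] U)) {a b : E →L[ℂ] E} (hab : a ≤ b) :
    π a ≤ π b := by
  rw [aux_le_iff_sub_nonneg] at hab ⊢
  rw [← map_sub]
  exact aux_nonneg_map π hab

lemma aux_contractive (π : (E →L[ℂ] E) →⋆ₐ[ℂ] (U →L[ℂ] U)) (a : E →L[ℂ] E) :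
    ‖π a‖ ≤ ‖a‖ :=
  NonUnitalStarAlgHom.norm_apply_le π a

lemma aux_norm_sq_le {S : E →L[ℂ] E} (hS : 0 ≤ S) (x : E) :
    ‖S x‖ ^ 2 ≤ ‖S‖ * RCLike.re ⟪S x, x⟫_ℂ := by
  set r := CFC.sqrt S with hr
  have h2 : r ^ 2 = S := CFC.sq_sqrt S hS
  have hrsa : IsSelfAdjoint r := IsSelfAdjoint.of_nonneg (CFC.sqrt_nonneg (a := S))
  have hSx : S x = r (r x) := by rw [← h2, sq, ContinuousLinearMap.mul_apply]
  have hnr : ‖r‖ * ‖r‖ = ‖S‖ := by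
    rw [← CStarRing.norm_star_mul_self (x := r), hrsa.star_eq, ← sq, h2]
  have hinner : (⟪r x, r x⟫_ℂ) = ⟪S x, x⟫_ℂ := by
    calc ⟪r x, r x⟫_ℂ = ⟪r (r x), x⟫_ℂ := by
          rw [← ContinuousLinearMap.adjoint_inner_left, hrsa.adjoint_eq]
    _ = ⟪S x, x⟫_ℂ := by rw [hSx]
  have hrx : ‖r x‖ ^ 2 = RCLike.re ⟪S x, x⟫_ℂ := by
    rw [← hinner, inner_self_eq_norm_sq (𝕜 := ℂ)]
  calc ‖S x‖ ^ 2 = ‖r (r x)‖ ^ 2 := by rw [hSx]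
  _ ≤ (‖r‖ * ‖r x‖) ^ 2 := by
      have := r.le_opNorm (r x)
      exact pow_le_pow_left₀ (norm_nonneg _) this 2
  _ = (‖r‖ * ‖r‖) * ‖r x‖ ^ 2 := by ring
  _ = ‖S‖ * RCLike.re ⟪S x, x⟫_ℂ := by rw [hnr, hrx]

lemma aux_re_mono {a b : E →L[ℂ] E} (hab : a ≤ b) (x : E) :
    RCLike.re ⟪a x, x⟫_ℂ ≤ RCLike.re ⟪b x, x⟫_ℂ := by
  have h := hab.2 x
  rw [ContinuousLinearMap.reApplyInnerSelf, ContinuousLinearMap.sub_apply, inner_sub_left,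
    map_sub, sub_nonneg] at h
  exact h

lemma aux_norm_le {a b : E →L[ℂ] E} (ha : 0 ≤ a) (hab : a ≤ b) : ‖a‖ ≤ ‖b‖ :=
  CStarAlgebra.norm_le_norm_of_nonneg_of_le ha hab

lemma aux_conj_mono {a b : E →L[ℂ] E} (hab : a ≤ b) (Q : E →L[ℂ] E)
    (hQ : IsSelfAdjoint Q) : Q * a * Q ≤ Q * b * Q := by
  have h := ((ContinuousLinearMap.le_def a b).mp hab).adjoint_conj Q
  rw [← ContinuousLinearMap.star_eq_adjoint, hQ.star_eq] at h
  rw [ContinuousLinearMap.le_def]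
  have heq : Q * b * Q - Q * a * Q = Q ∘L ((b - a) ∘L Q) := by
    ext x
    simp [ContinuousLinearMap.mul_apply, map_sub]
  rw [heq]
  exact h

lemma aux_conj_inner (Q X : E →L[ℂ] E) (hQ : IsSelfAdjoint Q) (u : E) :
    ⟪(Q * X * Q) u, u⟫_ℂ = ⟪X (Q u), Q u⟫_ℂ := by
  have happ : (Q * X * Q) u = Q (X (Q u)) := rfl
  rw [happ, ← ContinuousLinearMap.adjoint_inner_left Q u (X (Q u)), hQ.adjoint_eq]

lemma aux_tendsto_of_isLUB {ι : Type} [Preorder ι] [Nonempty ι] [IsDirected ι (· ≤ ·)]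
    (T : ι → E →L[ℂ] E) (T' : E →L[ℂ] E)
    (hpos : ∀ i, 0 ≤ T i) (hmono : ∀ i j, i ≤ j → T i ≤ T j)
    (hub : ∀ i, T i ≤ T') (hlub : ∀ c, (∀ i, T i ≤ c) → T' ≤ c) (x : E) :
    Tendsto (fun i => T i x) atTop (𝓝 (T' x)) := by
  set f : E → ι → ℝ := fun y i => RCLike.re ⟪T i y, y⟫_ℂ with hf
  have hfmono : ∀ y, Monotone (f y) := fun y i j hij => aux_re_mono (hmono i j hij) y
  have hfbdd : ∀ y, BddAbove (Set.range (f y)) := fun y =>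
    ⟨RCLike.re ⟪T' y, y⟫_ℂ, by rintro - ⟨i, rfl⟩; exact aux_re_mono (hub i) y⟩
  have hftend : ∀ y, Tendsto (f y) atTop (𝓝 (⨆ i, f y i)) := fun y =>
    tendsto_atTop_ciSup (hfmono y) (hfbdd y)
  set B : ℝ := 2 * ‖T'‖ + 1 with hB
  have hBpos : 0 < B := by positivity
  have hkey : ∀ y, ∀ i j, i ≤ j → ‖T j y - T i y‖ ^ 2 ≤ B * (f y j - f y i) := by
    intro y i j hij
    have hsub : (0 : E →L[ℂ] E) ≤ T j - T i := (aux_le_iff_sub_nonneg _ _).mp (hmono i j hij)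
    have h1 : ‖(T j - T i) y‖ ^ 2 ≤ ‖T j - T i‖ * RCLike.re ⟪(T j - T i) y, y⟫_ℂ :=
      aux_norm_sq_le hsub y
    have h2 : ‖T j - T i‖ ≤ B := by
      have := norm_sub_le (T j) (T i)
      have hj := aux_norm_le (hpos j) (hub j)
      have hi := aux_norm_le (hpos i) (hub i)
      rw [hB]; linarith
    have h3 : RCLike.re ⟪(T j - T i) y, y⟫_ℂ = f y j - f y i := by
      rw [ContinuousLinearMap.sub_apply, inner_sub_left, map_sub]
    have h4 : (0:ℝ) ≤ RCLike.re ⟪(T j - T i) y, y⟫_ℂ := by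
      have := ((ContinuousLinearMap.nonneg_iff_isPositive _).mp hsub).2 y
      simpa [ContinuousLinearMap.reApplyInnerSelf, inner_sub_left] using this
    calc ‖T j y - T i y‖ ^ 2 = ‖(T j - T i) y‖ ^ 2 := by rw [ContinuousLinearMap.sub_apply]
    _ ≤ ‖T j - T i‖ * RCLike.re ⟪(T j - T i) y, y⟫_ℂ := h1
    _ ≤ B * (f y j - f y i) := by rw [← h3]; exact mul_le_mul_of_nonneg_right h2 h4
  have hcauchy : ∀ y, CauchySeq fun i => T i y := by
    intro y
    refine Metric.cauchy_iff.mpr ⟨Filter.map_neBot, fun ε hε => ?_⟩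
    set L := ⨆ i, f y i with hL
    have hδ : (0:ℝ) < ε ^ 2 / (8 * B) := by positivity
    have : ∀ᶠ i in atTop, f y i > L - ε ^ 2 / (8 * B) :=
      (hftend y).eventually (eventually_gt_nhds (by linarith))
    obtain ⟨i₀, hi₀⟩ := this.exists
    refine ⟨(fun i => T i y) '' Set.Ici i₀, Filter.image_mem_map (Ici_mem_atTop i₀), ?_⟩
    rintro - ⟨j, hj, rfl⟩ - ⟨k, hk, rfl⟩
    obtain ⟨m, hjm, hkm⟩ := exists_ge_ge j k
    have hle : ∀ l, f y l ≤ L := fun l => le_ciSup (hfbdd y) l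
    have hbound : ∀ l, i₀ ≤ l → l ≤ m → ‖T m y - T l y‖ < ε / 2 := by
      intro l hl hlm
      have h₁ := hkey y l m hlm
      have h₂ : f y m - f y l ≤ ε ^ 2 / (8 * B) := by
        have := hle m
        linarith [hfmono y hl]
      have : ‖T m y - T l y‖ ^ 2 ≤ ε ^ 2 / 8 := by
        calc ‖T m y - T l y‖ ^ 2 ≤ B * (f y m - f y l) := h₁
        _ ≤ B * (ε ^ 2 / (8 * B)) := mul_le_mul_of_nonneg_left h₂ hBpos.le
        _ = ε ^ 2 / 8 := by field_simp
      nlinarith [norm_nonneg (T m y - T l y), sq_nonneg (‖T m y - T l y‖ - ε / 2), hε]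
    have hj' := hbound j hj hjm
    have hk' := hbound k hk hkm
    calc dist (T j y) (T k y) ≤ dist (T j y) (T m y) + dist (T m y) (T k y) := dist_triangle _ _ _
    _ < ε / 2 + ε / 2 := by
        rw [dist_eq_norm, dist_eq_norm, norm_sub_rev]
        exact add_lt_add hj' hk'
    _ = ε := by ring
  choose g hg using fun y => cauchySeq_tendsto_of_complete (hcauchy y)
  have hsa : ∀ i, IsSelfAdjoint (T i) := fun i =>
    ((ContinuousLinearMap.nonneg_iff_isPositive _).mp (hpos i)).isSelfAdjoint
  have hgadd : ∀ y z, g (y + z) = g y + g z := by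
    intro y z
    refine tendsto_nhds_unique (hg (y + z)) ?_
    have : (fun i => T i (y + z)) = fun i => T i y + T i z := by
      funext i; rw [map_add]
    rw [this]
    exact (hg y).add (hg z)
  have hgsmul : ∀ (c : ℂ) y, g (c • y) = c • g y := by
    intro c y
    refine tendsto_nhds_unique (hg (c • y)) ?_
    have : (fun i => T i (c • y)) = fun i => c • T i y := by
      funext i; rw [map_smul]
    rw [this]
    exact (hg y).const_smul c
  have hgbound : ∀ y, ‖g y‖ ≤ ‖T'‖ * ‖y‖ := by
    intro y
    refine le_of_tendsto (hg y).norm (Eventually.of_forall fun i => ?_)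
    exact ((T i).le_opNorm y).trans
      (mul_le_mul_of_nonneg_right (aux_norm_le (hpos i) (hub i)) (norm_nonneg y))
  set T'' : E →L[ℂ] E := LinearMap.mkContinuous
    { toFun := g, map_add' := hgadd, map_smul' := hgsmul } ‖T'‖ hgbound with hT''
  have hT''tend : ∀ y, Tendsto (fun i => T i y) atTop (𝓝 (T'' y)) := fun y => hg y
  have hinner_tend : ∀ y z, Tendsto (fun i => ⟪T i y, z⟫_ℂ) atTop (𝓝 ⟪T'' y, z⟫_ℂ) :=
    fun y z => (hT''tend y).inner tendsto_const_nhds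
  have hT''sa : IsSelfAdjoint T'' := by
    rw [ContinuousLinearMap.isSelfAdjoint_iff_isSymmetric]
    intro y z
    show ⟪T'' y, z⟫_ℂ = ⟪y, T'' z⟫_ℂ
    refine tendsto_nhds_unique (hinner_tend y z) ?_
    have : (fun i => ⟪T i y, z⟫_ℂ) = fun i => ⟪y, T i z⟫_ℂ := by
      funext i
      exact (ContinuousLinearMap.isSelfAdjoint_iff_isSymmetric.mp (hsa i)) y z
    rw [this]
    exact tendsto_const_nhds.inner (hT''tend z)
  have hre_tend : ∀ y, Tendsto (fun i => f y i) atTop (𝓝 (RCLike.re ⟪T'' y, y⟫_ℂ)) := by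
    intro y
    exact (RCLike.continuous_re.tendsto _).comp (hinner_tend y y)
  have hupper : ∀ i, T i ≤ T'' := by
    intro i
    constructor
    · exact ContinuousLinearMap.isSelfAdjoint_iff_isSymmetric.mp (hT''sa.sub (hsa i))
    · intro y
      rw [ContinuousLinearMap.reApplyInnerSelf, ContinuousLinearMap.sub_apply, inner_sub_left,
        map_sub, sub_nonneg]
      refine ge_of_tendsto (hre_tend y) ?_
      filter_upwards [eventually_ge_atTop i] with j hj
      exact hfmono y hj
  have hT'le : T' ≤ T'' := hlub T'' hupper
  have hT''le : T'' ≤ T' := by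
    constructor
    · have hT'sa : IsSelfAdjoint T' := by
        obtain ⟨i⟩ := ‹Nonempty ι›
        have h := ((aux_le_iff_sub_nonneg _ _).mp (hub i))
        have hsub := ((ContinuousLinearMap.nonneg_iff_isPositive _).mp h).isSelfAdjoint
        have heq : T' = (T' - T i) + T i := by abel
        rw [heq]; exact hsub.add (hsa i)
      exact ContinuousLinearMap.isSelfAdjoint_iff_isSymmetric.mp (hT'sa.sub hT''sa)
    · intro y
      rw [ContinuousLinearMap.reApplyInnerSelf, ContinuousLinearMap.sub_apply, inner_sub_left,
        map_sub, sub_nonneg]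
      refine le_of_tendsto (hre_tend y) (Eventually.of_forall fun i => aux_re_mono (hub i) y)
  have : T'' = T' := le_antisymm hT''le hT'le
  rw [← this]
  exact hT''tend x

end AuxLemmas

section AuxP

variable {H' : Type*} [NormedAddCommGroup H'] [InnerProductSpace ℂ H'] [CompleteSpace H']

variable (e : HilbertBasis ℕ ℂ H') (P : ℕ → (H' →L[ℂ] H'))
  (hP : ∀ n x, P n x = ∑ i ∈ Finset.range (n + 1), ⟪e i, x⟫_ℂ • e i)

include hP

lemma auxP_inner_left (n : ℕ) (x y : H') :
    ⟪P n x, y⟫_ℂ = ∑ i ∈ Finset.range (n + 1), (starRingEnd ℂ) ⟪e i, x⟫_ℂ * ⟪e i, y⟫_ℂ := by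
  rw [hP, sum_inner]
  simp [inner_smul_left]

lemma auxP_inner_right (n : ℕ) (x y : H') :
    ⟪x, P n y⟫_ℂ = ∑ i ∈ Finset.range (n + 1), ⟪e i, y⟫_ℂ * ⟪x, e i⟫_ℂ := by
  rw [hP, inner_sum]
  simp [inner_smul_right]

lemma auxP_sa (n : ℕ) : IsSelfAdjoint (P n) := by
  rw [ContinuousLinearMap.isSelfAdjoint_iff_isSymmetric]
  intro x y
  show ⟪P n x, y⟫_ℂ = ⟪x, P n y⟫_ℂ
  rw [auxP_inner_left e P hP, auxP_inner_right e P hP]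
  refine Finset.sum_congr rfl fun i _ => ?_
  rw [inner_conj_symm]
  ring

lemma auxP_quad (n : ℕ) (x : H') :
    ⟪P n x, x⟫_ℂ = ∑ i ∈ Finset.range (n + 1), (‖⟪e i, x⟫_ℂ‖ : ℂ) ^ 2 := by
  rw [auxP_inner_left e P hP]
  refine Finset.sum_congr rfl fun i _ => ?_
  exact RCLike.conj_mul _

lemma auxP_quad_re (n : ℕ) (x : H') :
    RCLike.re ⟪P n x, x⟫_ℂ = ∑ i ∈ Finset.range (n + 1), ‖⟪e i, x⟫_ℂ‖ ^ 2 := by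
  rw [auxP_quad e P hP]
  have : (∑ i ∈ Finset.range (n + 1), (‖⟪e i, x⟫_ℂ‖ : ℂ) ^ 2)
      = ((∑ i ∈ Finset.range (n + 1), ‖⟪e i, x⟫_ℂ‖ ^ 2 : ℝ) : ℂ) := by
    push_cast; ring
  rw [this]
  simp [← Complex.ofReal_pow]

lemma auxP_pos (n : ℕ) : 0 ≤ P n := by
  rw [ContinuousLinearMap.nonneg_iff_isPositive]
  refine ⟨ContinuousLinearMap.isSelfAdjoint_iff_isSymmetric.mp (auxP_sa e P hP n), fun x => ?_⟩
  rw [ContinuousLinearMap.reApplyInnerSelf, auxP_quad_re e P hP]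
  positivity

lemma auxP_mono (n m : ℕ) (h : n ≤ m) : P n ≤ P m := by
  refine ⟨ContinuousLinearMap.isSelfAdjoint_iff_isSymmetric.mp ((auxP_sa e P hP m).sub (auxP_sa e P hP n)), fun x => ?_⟩
  rw [ContinuousLinearMap.reApplyInnerSelf, ContinuousLinearMap.sub_apply, inner_sub_left,
    map_sub, sub_nonneg, auxP_quad_re e P hP, auxP_quad_re e P hP]
  exact Finset.sum_le_sum_of_subset_of_nonneg
    (Finset.range_subset_range.mpr (by omega)) fun i _ _ => by positivity

lemma auxP_le_one (n : ℕ) : P n ≤ 1 := by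
  refine ⟨ContinuousLinearMap.isSelfAdjoint_iff_isSymmetric.mp ((IsSelfAdjoint.one (H' →L[ℂ] H')).sub (auxP_sa e P hP n)), fun x => ?_⟩
  rw [ContinuousLinearMap.reApplyInnerSelf, ContinuousLinearMap.sub_apply, inner_sub_left,
    map_sub, sub_nonneg, auxP_quad_re e P hP, ContinuousLinearMap.one_apply,
    inner_self_eq_norm_sq (𝕜 := ℂ)]
  exact e.orthonormal.sum_inner_products_le x

lemma auxP_parseval (x : H') :
    Tendsto (fun n => ∑ i ∈ Finset.range (n + 1), ‖⟪e i, x⟫_ℂ‖ ^ 2) atTop (𝓝 (‖x‖ ^ 2)) := by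
  have h := e.hasSum_inner_mul_inner x x
  have heq : (fun i => ⟪x, e i⟫_ℂ * ⟪e i, x⟫_ℂ) = fun i => ((‖⟪e i, x⟫_ℂ‖ : ℂ) ^ 2) := by
    funext i
    rw [← inner_conj_symm (𝕜 := ℂ) x (e i)]
    exact RCLike.conj_mul _
  have hx : ⟪x, x⟫_ℂ = ((‖x‖ : ℂ)) ^ 2 := inner_self_eq_norm_sq_to_K x
  rw [heq, hx] at h
  have h2 : HasSum (fun i => ‖⟪e i, x⟫_ℂ‖ ^ 2) (‖x‖ ^ 2) := by
    have h' := Complex.hasSum_re h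
    simpa [← Complex.ofReal_pow] using h'
  have h3 := h2.tendsto_sum_nat
  exact h3.comp (tendsto_add_atTop_nat 1)

lemma auxP_lub {c : H' →L[ℂ] H'} (hc : ∀ n, P n ≤ c) : 1 ≤ c := by
  have hcsa : IsSelfAdjoint c := by
    have h0 : IsSelfAdjoint (c - P 0) :=
      ((ContinuousLinearMap.le_def _ _).mp (hc 0)).isSelfAdjoint
    have heq : c = (c - P 0) + P 0 := by abel
    rw [heq]; exact h0.add (auxP_sa e P hP 0)
  refine ⟨ContinuousLinearMap.isSelfAdjoint_iff_isSymmetric.mp (hcsa.sub (IsSelfAdjoint.one (H' →L[ℂ] H'))), fun x => ?_⟩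
  rw [ContinuousLinearMap.reApplyInnerSelf, ContinuousLinearMap.sub_apply, inner_sub_left,
    map_sub, sub_nonneg, ContinuousLinearMap.one_apply, inner_self_eq_norm_sq (𝕜 := ℂ)]
  have hge : ∀ n, ∑ i ∈ Finset.range (n + 1), ‖⟪e i, x⟫_ℂ‖ ^ 2 ≤ RCLike.re ⟪c x, x⟫_ℂ := by
    intro n
    have := (hc n).2 x
    rw [ContinuousLinearMap.reApplyInnerSelf, ContinuousLinearMap.sub_apply, inner_sub_left,
      map_sub, sub_nonneg, auxP_quad_re e P hP] at this
    exact this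
  exact le_of_tendsto (auxP_parseval e P hP x) (Eventually.of_forall hge)

lemma auxP_idem (n : ℕ) : P n * P n = P n := by
  ext x
  rw [ContinuousLinearMap.mul_apply, hP n (P n x), hP n x]
  refine Finset.sum_congr rfl fun i hi => ?_
  congr 1
  rw [inner_sum]
  simp only [inner_smul_right, orthonormal_iff_ite.mp e.orthonormal]
  rw [Finset.sum_eq_single i]
  · simp
  · intro j hj hne
    simp [Ne.symm hne]
  · intro h; exact absurd hi h

lemma auxP_contraction (n : ℕ) (y : H') : ‖P n y‖ ≤ ‖y‖ := by
  have happ : P n (P n y) = P n y := by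
    rw [← ContinuousLinearMap.mul_apply, auxP_idem e P hP n]
  have hsym := ContinuousLinearMap.isSelfAdjoint_iff_isSymmetric.mp (auxP_sa e P hP n)
  have h1 : ⟪P n y, P n y⟫_ℂ = ⟪y, P n y⟫_ℂ := by
    have h := hsym y (P n y)
    simp only [ContinuousLinearMap.coe_coe] at h
    rw [happ] at h
    exact h
  have h : ‖P n y‖ ^ 2 = RCLike.re ⟪P n y, y⟫_ℂ := by
    rw [← inner_self_eq_norm_sq (𝕜 := ℂ), h1, inner_re_symm]
  have h2 : RCLike.re ⟪P n y, y⟫_ℂ ≤ ‖y‖ ^ 2 := by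
    rw [auxP_quad_re e P hP]
    exact e.orthonormal.sum_inner_products_le y
  nlinarith [norm_nonneg (P n y), norm_nonneg y]

lemma auxP_compress_norm (n : ℕ) (S : H' →L[ℂ] H') :
    ‖P n * S * P n‖ ≤ ∑ k ∈ Finset.range (n + 1), ‖S (e k)‖ := by
  refine ContinuousLinearMap.opNorm_le_bound _
    (Finset.sum_nonneg fun k _ => norm_nonneg _) fun x => ?_
  have happ : (P n * S * P n) x = P n (S (P n x)) := rfl
  rw [happ]
  calc ‖P n (S (P n x))‖ ≤ ‖S (P n x)‖ := auxP_contraction e P hP n _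
  _ = ‖∑ k ∈ Finset.range (n + 1), ⟪e k, x⟫_ℂ • S (e k)‖ := by
      rw [hP n x, map_sum]
      simp only [map_smul]
  _ ≤ ∑ k ∈ Finset.range (n + 1), ‖⟪e k, x⟫_ℂ • S (e k)‖ := norm_sum_le _ _
  _ ≤ ∑ k ∈ Finset.range (n + 1), ‖S (e k)‖ * ‖x‖ := by
      refine Finset.sum_le_sum fun k _ => ?_
      rw [norm_smul, mul_comm]
      refine mul_le_mul_of_nonneg_left ?_ (norm_nonneg _)
      calc ‖⟪e k, x⟫_ℂ‖ ≤ ‖e k‖ * ‖x‖ := norm_inner_le_norm _ _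
      _ = ‖x‖ := by rw [e.orthonormal.1 k, one_mul]
  _ = (∑ k ∈ Finset.range (n + 1), ‖S (e k)‖) * ‖x‖ := by rw [Finset.sum_mul]

end AuxP

lemma aux_opLE_iff {E : Type*} [NormedAddCommGroup E] [InnerProductSpace ℂ E] [CompleteSpace E]
    {a b : E →L[ℂ] E} : opLE a b ↔ a ≤ b := Iff.rfl

/-- Let `H` be a separable Hilbert space with Hilbert basis `(e_i)_(i ∈ ℕ)`
and let `P_n` be the orthogonal projection onto `span {e_i : i ≤ n}`. A unital
*-homomorphism `π : B(H) → B(Û)` (with `Û` not necessarily separable) is normal if and only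
if `π(P_n) ↑ I`. -/
theorem statement11 {H U : Type*} [NormedAddCommGroup H] [InnerProductSpace ℂ H] [CompleteSpace H]
    [TopologicalSpace.SeparableSpace H] [NormedAddCommGroup U] [InnerProductSpace ℂ U] [CompleteSpace U]
    (e : HilbertBasis ℕ ℂ H) (π : (H →L[ℂ] H) →⋆ₐ[ℂ] (U →L[ℂ] U))
    (P : ℕ → (H →L[ℂ] H))
    (hP : ∀ n x, P n x = ∑ i ∈ Finset.range (n + 1), ⟪e i, x⟫_ℂ • e i) :
    NormalHom π ↔ opIsLUB (Set.range fun n => π (P n)) 1 := by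
  constructor
  · -- forward direction
    intro h
    have h2 := h P 1
      (fun n => (ContinuousLinearMap.nonneg_iff_isPositive _).mp (auxP_pos e P hP n))
      (fun n m hnm => aux_opLE_iff.mpr (auxP_mono e P hP n m hnm))
      ⟨1, fun n => aux_opLE_iff.mpr (auxP_le_one e P hP n)⟩
      ⟨by rintro - ⟨n, rfl⟩; exact aux_opLE_iff.mpr (auxP_le_one e P hP n),
       fun c hc => aux_opLE_iff.mpr (auxP_lub e P hP fun n =>
        aux_opLE_iff.mp (hc (P n) ⟨n, rfl⟩))⟩
    rwa [map_one] at h2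
  · -- reverse direction
    intro hQ
    intro ι _inst1 _inst2 _inst3 T T' hTpos hTmono hTbd hTlub
    -- order-theoretic data
    have hTpos' : ∀ i, 0 ≤ T i := fun i =>
      (ContinuousLinearMap.nonneg_iff_isPositive _).mpr (hTpos i)
    have hTmono' : ∀ i j, i ≤ j → T i ≤ T j := fun i j hij => aux_opLE_iff.mp (hTmono i j hij)
    have hub : ∀ i, T i ≤ T' := fun i => aux_opLE_iff.mp (hTlub.1 (T i) ⟨i, rfl⟩)
    have hlub : ∀ c, (∀ i, T i ≤ c) → T' ≤ c := fun c hc =>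
      aux_opLE_iff.mp (hTlub.2 c (by rintro - ⟨i, rfl⟩; exact aux_opLE_iff.mpr (hc i)))
    have hstrong : ∀ x, Tendsto (fun i => T i x) atTop (𝓝 (T' x)) :=
      aux_tendsto_of_isLUB T T' hTpos' hTmono' hub hlub
    -- the projections and their images
    have hQpos : ∀ n, 0 ≤ π (P n) := fun n => aux_nonneg_map π (auxP_pos e P hP n)
    have hQmono : ∀ n m : ℕ, n ≤ m → π (P n) ≤ π (P m) := fun n m hnm =>
      aux_map_mono π (auxP_mono e P hP n m hnm)
    have hQub : ∀ n, π (P n) ≤ 1 := fun n => aux_opLE_iff.mp (hQ.1 (π (P n)) ⟨n, rfl⟩)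
    have hQlub : ∀ c, (∀ n, π (P n) ≤ c) → 1 ≤ c := fun c hc =>
      aux_opLE_iff.mp (hQ.2 c (by rintro - ⟨n, rfl⟩; exact aux_opLE_iff.mpr (hc n)))
    have hQstrong : ∀ u, Tendsto (fun n => π (P n) u) atTop (𝓝 u) := by
      intro u
      have := aux_tendsto_of_isLUB (fun n => π (P n)) 1 hQpos hQmono hQub hQlub u
      simpa using this
    -- selfadjointness facts
    obtain ⟨i₀⟩ := (inferInstance : Nonempty ι)
    have hT'sa : IsSelfAdjoint T' := by
      have hsub : IsSelfAdjoint (T' - T i₀) :=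
        ((ContinuousLinearMap.le_def _ _).mp (hub i₀)).isSelfAdjoint
      have heq : T' = (T' - T i₀) + T i₀ := by abel
      rw [heq]; exact hsub.add (hTpos i₀).isSelfAdjoint
    have hπT'sa : IsSelfAdjoint (π T') := by
      show star (π T') = π T'
      rw [← map_star, hT'sa.star_eq]
    have hQsa : ∀ n, IsSelfAdjoint (π (P n)) := fun n =>
      ((ContinuousLinearMap.nonneg_iff_isPositive _).mp (hQpos n)).isSelfAdjoint
    constructor
    · rintro - ⟨i, rfl⟩
      exact aux_opLE_iff.mpr (aux_map_mono π (hub i))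
    · intro C hC'
      have hC : ∀ i, π (T i) ≤ C := fun i => aux_opLE_iff.mp (hC' (π (T i)) ⟨i, rfl⟩)
      have hCsa : IsSelfAdjoint C := by
        have hsub : IsSelfAdjoint (C - π (T i₀)) :=
          ((ContinuousLinearMap.le_def _ _).mp (hC i₀)).isSelfAdjoint
        have hπsa : IsSelfAdjoint (π (T i₀)) :=
          ((ContinuousLinearMap.nonneg_iff_isPositive _).mp
            (aux_nonneg_map π (hTpos' i₀))).isSelfAdjoint
        have heq : C = (C - π (T i₀)) + π (T i₀) := by abel
        rw [heq]; exact hsub.add hπsa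
      refine ⟨ContinuousLinearMap.isSelfAdjoint_iff_isSymmetric.mp (hCsa.sub hπT'sa), fun u => ?_⟩
      rw [ContinuousLinearMap.reApplyInnerSelf, ContinuousLinearMap.sub_apply, inner_sub_left,
        map_sub, sub_nonneg]
      -- goal : re ⟪π T' u, u⟫ ≤ re ⟪C u, u⟫
      -- Step 1: compressions converge in norm
      have hcomp : ∀ n : ℕ, Tendsto (fun i => π (P n * T i * P n)) atTop
          (𝓝 (π (P n * T' * P n))) := by
        intro n
        rw [tendsto_iff_norm_sub_tendsto_zero]
        have hbd : ∀ i, ‖π (P n * T i * P n) - π (P n * T' * P n)‖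
            ≤ ∑ k ∈ Finset.range (n + 1), ‖(T i - T') (e k)‖ := by
          intro i
          rw [← map_sub]
          refine (aux_contractive π _).trans ?_
          have heq : P n * T i * P n - P n * T' * P n = P n * (T i - T') * P n := by
            ext x; simp [ContinuousLinearMap.mul_apply, map_sub]
          rw [heq]
          exact auxP_compress_norm e P hP n (T i - T')
        have hsum : Tendsto (fun i => ∑ k ∈ Finset.range (n + 1), ‖(T i - T') (e k)‖)
            atTop (𝓝 0) := by
          have : ∀ k, Tendsto (fun i => ‖(T i - T') (e k)‖) atTop (𝓝 0) := by
            intro k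
            have h1 := tendsto_iff_norm_sub_tendsto_zero.mp (hstrong (e k))
            simpa [ContinuousLinearMap.sub_apply] using h1
          have h2 := tendsto_finset_sum (Finset.range (n + 1))
            (fun k _ => this k)
          simpa using h2
        exact squeeze_zero (fun i => norm_nonneg _) hbd hsum
      -- Step 2: each compressed image is dominated by the compression of C
      have hdom : ∀ (n : ℕ) i, RCLike.re ⟪π (P n * T i * P n) u, u⟫_ℂ
          ≤ RCLike.re ⟪(π (P n) * C * π (P n)) u, u⟫_ℂ := by
        intro n i
        have heq : π (P n * T i * P n) = π (P n) * π (T i) * π (P n) := by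
          rw [map_mul, map_mul]
        rw [heq]
        exact aux_re_mono (aux_conj_mono (hC i) (π (P n)) (hQsa n)) u
      -- Step 3: pass to the limit in i
      have hlim : ∀ n : ℕ, RCLike.re ⟪π T' ((π (P n)) u), (π (P n)) u⟫_ℂ
          ≤ RCLike.re ⟪C ((π (P n)) u), (π (P n)) u⟫_ℂ := by
        intro n
        have htend : Tendsto (fun i => RCLike.re ⟪π (P n * T i * P n) u, u⟫_ℂ) atTop
            (𝓝 (RCLike.re ⟪π (P n * T' * P n) u, u⟫_ℂ)) := by
          have h1 : Tendsto (fun i => π (P n * T i * P n) u) atTop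
              (𝓝 (π (P n * T' * P n) u)) :=
            ((ContinuousLinearMap.apply ℂ U u).continuous.tendsto _).comp (hcomp n)
          exact (RCLike.continuous_re.tendsto _).comp (h1.inner tendsto_const_nhds)
        have h2 : RCLike.re ⟪π (P n * T' * P n) u, u⟫_ℂ
            ≤ RCLike.re ⟪(π (P n) * C * π (P n)) u, u⟫_ℂ :=
          le_of_tendsto htend (Eventually.of_forall (hdom n))
        have heqL : π (P n * T' * P n) = π (P n) * π T' * π (P n) := by
          rw [map_mul, map_mul]
        rw [heqL, aux_conj_inner _ _ (hQsa n) u] at h2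
        rwa [aux_conj_inner _ _ (hQsa n) u] at h2
      -- Step 4: pass to the limit in n
      have htendL : Tendsto (fun n => RCLike.re ⟪π T' ((π (P n)) u), (π (P n)) u⟫_ℂ) atTop
          (𝓝 (RCLike.re ⟪π T' u, u⟫_ℂ)) := by
        have h1 : Tendsto (fun n => (π T') ((π (P n)) u)) atTop (𝓝 ((π T') u)) :=
          ((π T').continuous.tendsto u).comp (hQstrong u)
        exact (RCLike.continuous_re.tendsto _).comp (h1.inner (hQstrong u))
      have htendR : Tendsto (fun n => RCLike.re ⟪C ((π (P n)) u), (π (P n)) u⟫_ℂ) atTop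
          (𝓝 (RCLike.re ⟪C u, u⟫_ℂ)) := by
        have h1 : Tendsto (fun n => C ((π (P n)) u)) atTop (𝓝 (C u)) :=
          (C.continuous.tendsto u).comp (hQstrong u)
        exact (RCLike.continuous_re.tendsto _).comp (h1.inner (hQstrong u))
      exact le_of_tendsto_of_tendsto' htendL htendR hlim


end QSM
end
end
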